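/- For 0 < ε < 1, the smaller root σ₁(ε) of the quadratic σ² − σ((ε+1)/ε)((1+ε²)/(1−ε²)) + 1/ε (i.e., the k = 1 polynomial p_1) is given by σ₁(ε) = (1/(2ε)) · ((1+ε²)/(1−ε)) · (1 − √(1 − 4ε((1−ε)/(1+ε²))²)), and it satisfies the asymptotic expansion σ₁(ε)·2π(1+ε) = 2π + 2πε + o(ε) as ε → 0⁺. -/

import Mathlib

open Real Filter

/-- The explicit formula for the first nonzero Steklov eigenvalue of the
annulus `A_ε = {ε < |x| < 1} ⊂ ℝ²`. -/
noncomputable def sigmaOneAnnulus (ε : ℝ) : ℝ :=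
  (1 / (2 * ε)) * ((1 + ε ^ 2) / (1 - ε)) *
    (1 - Real.sqrt (1 - 4 * ε * ((1 - ε) / (1 + ε ^ 2)) ^ 2))

/-- For `0 < ε < 1`, `sigmaOneAnnulus ε` is the smaller root of the quadratic
`σ² − σ((ε+1)/ε)((1+ε²)/(1−ε²)) + 1/ε` (the `k = 1` polynomial `p₁`), and it
satisfies the asymptotic expansion
`σ₁(ε)·2π(1+ε) = 2π + 2πε + o(ε)` as `ε → 0⁺`, where `2π(1+ε)` is the
perimeter of `∂A_ε`. -/


lemma disc_nonneg (ε : ℝ) : 0 ≤ 1 - 4 * ε * ((1 - ε) / (1 + ε ^ 2)) ^ 2 := by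
  have h2 : (0:ℝ) < 1 + ε ^ 2 := by positivity
  have key : 1 - 4 * ε * ((1 - ε) / (1 + ε ^ 2)) ^ 2
      = ((1 + ε ^ 2) ^ 2 - 4 * ε * (1 - ε) ^ 2) / (1 + ε ^ 2) ^ 2 := by
    field_simp
  rw [key]
  apply div_nonneg _ (by positivity)
  nlinarith [sq_nonneg (ε ^ 2 - 2 * ε), sq_nonneg (ε - 1/3), sq_nonneg ε]

lemma quad_facts (ε : ℝ) (h0 : 0 < ε) (h1 : ε < 1) :
    (sigmaOneAnnulus ε ^ 2 -
        sigmaOneAnnulus ε * ((ε + 1) / ε) * ((1 + ε ^ 2) / (1 - ε ^ 2)) + 1 / ε = 0) ∧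
      (∀ σ : ℝ, σ ^ 2 - σ * ((ε + 1) / ε) * ((1 + ε ^ 2) / (1 - ε ^ 2)) + 1 / ε = 0 →
        sigmaOneAnnulus ε ≤ σ) := by
  have hε : ε ≠ 0 := ne_of_gt h0
  have h1e : (0:ℝ) < 1 - ε := by linarith
  have h1e2 : (1:ℝ) - ε ^ 2 ≠ 0 := by nlinarith
  have h2 : (0:ℝ) < 1 + ε ^ 2 := by positivity
  set s := Real.sqrt (1 - 4 * ε * ((1 - ε) / (1 + ε ^ 2)) ^ 2) with hsdef
  have hs : s ^ 2 = 1 - 4 * ε * ((1 - ε) / (1 + ε ^ 2)) ^ 2 :=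
    Real.sq_sqrt (disc_nonneg ε)
  have hs0 : 0 ≤ s := Real.sqrt_nonneg _
  set c : ℝ := (1 / (2 * ε)) * ((1 + ε ^ 2) / (1 - ε)) with hcdef
  have hc0 : 0 < c := by
    rw [hcdef]; positivity
  have hsig : sigmaOneAnnulus ε = c * (1 - s) := by
    rw [sigmaOneAnnulus, hcdef, hsdef]
  have hb : ((ε + 1) / ε) * ((1 + ε ^ 2) / (1 - ε ^ 2)) = 2 * c := by
    rw [hcdef]
    field_simp
    ring
  have hcu : c ^ 2 * (1 - s ^ 2) = 1 / ε := by
    rw [hs, hcdef]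
    field_simp
    ring
  constructor
  · rw [hsig]
    have key : c * (1 - s) ^ 2 * c - c * (1 - s) * (((ε + 1) / ε) * ((1 + ε ^ 2) / (1 - ε ^ 2)))
        + 1 / ε = -(c ^ 2 * (1 - s ^ 2)) + 1 / ε := by
      rw [hb]; ring
    calc (c * (1 - s)) ^ 2 - c * (1 - s) * ((ε + 1) / ε) * ((1 + ε ^ 2) / (1 - ε ^ 2)) + 1 / ε
        = c * (1 - s) ^ 2 * c - c * (1 - s) * (((ε + 1) / ε) * ((1 + ε ^ 2) / (1 - ε ^ 2)))
            + 1 / ε := by ring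
      _ = -(c ^ 2 * (1 - s ^ 2)) + 1 / ε := key
      _ = 0 := by rw [hcu]; ring
  · intro σ hσ
    rw [mul_assoc, hb] at hσ
    -- (σ - c)^2 = (c*s)^2
    have hsq : (σ - c) ^ 2 = (c * s) ^ 2 := by
      have : c ^ 2 - 1 / ε = c ^ 2 * s ^ 2 := by nlinarith [hcu]
      nlinarith [hσ, this]
    rw [hsig]
    by_contra hlt
    push_neg at hlt
    have h3 : 0 < c * (1 - s) - σ := by linarith
    have h4 : 0 < c * (1 + s) - σ := by nlinarith [mul_nonneg hc0.le hs0]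
    nlinarith [mul_pos h3 h4]

noncomputable def Sfun (ε : ℝ) : ℝ := Real.sqrt (1 - 4 * ε * ((1 - ε) / (1 + ε ^ 2)) ^ 2)

noncomputable def Hfun (ε : ℝ) : ℝ :=
  2 * π * (-2 * (1 + ε) ^ 2 * ((1 + ε ^ 2) * (1 + Sfun ε)) + 4 * (1 + ε) * (1 - ε) ^ 2) /
    ((1 + ε ^ 2) * (1 + Sfun ε)) ^ 2

@[continuity, fun_prop]
lemma Sfun_cont : Continuous Sfun := by
  apply Real.continuous_sqrt.comp
  apply Continuous.sub continuous_const
  apply Continuous.mul (by continuity)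
  apply Continuous.pow
  exact Continuous.div (by continuity) (by continuity) (fun x => by positivity)

lemma Sfun_zero : Sfun 0 = 1 := by
  simp [Sfun]

lemma Hfun_tendsto : Tendsto Hfun (nhds 0) (nhds 0) := by
  have h1 : ContinuousAt Hfun 0 := by
    apply ContinuousAt.div
    · fun_prop
    · fun_prop
    · rw [Sfun_zero]; norm_num
  have h2 : Hfun 0 = 0 := by
    rw [Hfun, Sfun_zero]
    norm_num
  have h3 := h1.tendsto
  rwa [h2] at h3

lemma eq_on_Ioo (ε : ℝ) (h0 : 0 < ε) (h1 : ε < 1) :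
    (sigmaOneAnnulus ε * (2 * π * (1 + ε)) - 2 * π - 2 * π * ε) / ε = Hfun ε := by
  have hε : ε ≠ 0 := ne_of_gt h0
  have h1e : (0:ℝ) < 1 - ε := by linarith
  have h2 : (0:ℝ) < 1 + ε ^ 2 := by positivity
  set s := Sfun ε with hsdef
  have hs : s ^ 2 = 1 - 4 * ε * ((1 - ε) / (1 + ε ^ 2)) ^ 2 :=
    Real.sq_sqrt (disc_nonneg ε)
  have hs0 : 0 ≤ s := Real.sqrt_nonneg _
  have hs1 : (0:ℝ) < 1 + s := by linarith
  have hD : (0:ℝ) < (1 + ε ^ 2) * (1 + s) := mul_pos h2 hs1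
  have hs' : s ^ 2 * (1 + ε ^ 2) ^ 2 = (1 + ε ^ 2) ^ 2 - 4 * ε * (1 - ε) ^ 2 := by
    have h4 : ((1 - ε) / (1 + ε ^ 2)) ^ 2 * (1 + ε ^ 2) ^ 2 = (1 - ε) ^ 2 := by
      field_simp
    calc s ^ 2 * (1 + ε ^ 2) ^ 2
        = (1 - 4 * ε * ((1 - ε) / (1 + ε ^ 2)) ^ 2) * (1 + ε ^ 2) ^ 2 := by rw [hs]
      _ = (1 + ε ^ 2) ^ 2 - 4 * ε * (((1 - ε) / (1 + ε ^ 2)) ^ 2 * (1 + ε ^ 2) ^ 2) := by ring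
      _ = (1 + ε ^ 2) ^ 2 - 4 * ε * (1 - ε) ^ 2 := by rw [h4]
  have hsigD : sigmaOneAnnulus ε * ((1 + ε ^ 2) * (1 + s)) = 2 * (1 - ε) := by
    rw [sigmaOneAnnulus]
    rw [show Real.sqrt (1 - 4 * ε * ((1 - ε) / (1 + ε ^ 2)) ^ 2) = s from rfl]
    have expand : 1 / (2 * ε) * ((1 + ε ^ 2) / (1 - ε)) * (1 - s) * ((1 + ε ^ 2) * (1 + s))
        = 1 / (2 * ε) * ((1 + ε ^ 2) / (1 - ε)) * ((1 - s ^ 2) * (1 + ε ^ 2)) := by ring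
    rw [expand, hs]
    field_simp
    ring
  have hsig : sigmaOneAnnulus ε = 2 * (1 - ε) / ((1 + ε ^ 2) * (1 + s)) :=
    (eq_div_iff hD.ne').mpr hsigD
  rw [hsig, Hfun, ← hsdef]
  field_simp
  linear_combination (-(1 + ε)) * hs'

theorem sigmaOneAnnulus_root_and_asymptotics :
    (∀ ε : ℝ, 0 < ε → ε < 1 →
      (sigmaOneAnnulus ε ^ 2 -
        sigmaOneAnnulus ε * ((ε + 1) / ε) * ((1 + ε ^ 2) / (1 - ε ^ 2)) + 1 / ε = 0) ∧
      (∀ σ : ℝ, σ ^ 2 - σ * ((ε + 1) / ε) * ((1 + ε ^ 2) / (1 - ε ^ 2)) + 1 / ε = 0 →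
        sigmaOneAnnulus ε ≤ σ)) ∧
    Tendsto
      (fun ε : ℝ =>
        (sigmaOneAnnulus ε * (2 * π * (1 + ε)) - 2 * π - 2 * π * ε) / ε)
      (nhdsWithin 0 (Set.Ioi 0)) (nhds 0) := by
  constructor
  · exact fun ε h0 h1 => quad_facts ε h0 h1
  · refine Tendsto.congr' ?_ (Hfun_tendsto.mono_left nhdsWithin_le_nhds)
    have h01 : ∀ᶠ ε in nhdsWithin (0:ℝ) (Set.Ioi 0), ε < 1 :=
      (eventually_lt_nhds (by norm_num : (0:ℝ) < 1)).filter_mono nhdsWithin_le_nhds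
    filter_upwards [self_mem_nhdsWithin, h01] with ε hε hε1
    exact (eq_on_Ioo ε hε hε1).symm
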